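/- A finite simple graph G with n ≥ 1 vertices and m ≥ 1 edges admits a three-coloring if and only if δ_n(M(G)) ≤ √(m t² + 4 n t⁶ + m t¹⁰), where t = 1/(4(m+n)³). -/

import Mathlib

open Matrix

/-- The Frobenius norm of a real matrix: the square root of the sum of squares of entries. -/
noncomputable def frob {α β : Type*} [Fintype α] [Fintype β] (X : Matrix α β ℝ) : ℝ :=
  Real.sqrt (∑ i, ∑ j, X i j ^ 2)

/-- `delta M k` is the minimum, over all choices of a `k`-element set `𝒱` of column
indices of `M` (with `S` the corresponding column submatrix) and all matrices `A`,
of the Frobenius norm `‖M - S * A‖`. -/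
noncomputable def delta {α β : Type*} [Fintype α] [Fintype β]
    (M : Matrix α β ℝ) (k : ℕ) : ℝ :=
  sInf { x : ℝ | ∃ 𝒱 : Finset β, 𝒱.card = k ∧ ∃ A : Matrix 𝒱 β ℝ,
    x = frob (M - Matrix.of (fun r (c : 𝒱) => M r c.val) * A) }

/-- The matrix `M(G)` of the reduction: rows indexed by `V ⊕ {1,2,3} ⊕ {ε}`,
columns indexed by `(V × {1,2,3}) ⊕ E`. -/
def MG {V : Type*} [Fintype V] [DecidableEq V] (G : SimpleGraph V) [DecidableRel G.Adj]
    (t : ℝ) : Matrix (V ⊕ Fin 3 ⊕ Unit) ((V × Fin 3) ⊕ G.edgeSet) ℝ :=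
  fun r c =>
    match r, c with
    | Sum.inl u, Sum.inl (v, _) => if u = v then (1 : ℝ) else 0
    | Sum.inl u, Sum.inr e => if u ∈ (e : Sym2 V) then t ^ 2 else 0
    | Sum.inr (Sum.inl i), Sum.inl (_, j) => if i = j then t ^ 3 else 0
    | Sum.inr (Sum.inl _), Sum.inr _ => t ^ 5
    | Sum.inr (Sum.inr _), Sum.inl _ => 0
    | Sum.inr (Sum.inr _), Sum.inr _ => t


open Finset

set_option linter.unusedSectionVars false
set_option linter.unusedVariables false



section Helpers

/-- completion-of-square inequality -/
lemma key_ineq (t k cost x p : ℝ) (hk : 0 < k) (h : x^2 ≤ k * cost) :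
    p^2*t^6 - p^2*k*t^12 ≤ cost + t^6*(x-p)^2 := by
  have h0 : 0 ≤ (x - p*k*t^6)^2 := sq_nonneg _
  have h1 : 0 ≤ k*t^6*x^2 := by positivity
  have key : k*(cost + t^6*(x-p)^2) - k*(p^2*t^6 - p^2*k*t^12)
      = (k*cost - x^2) + (x - p*k*t^6)^2 + k*t^6*x^2 := by ring
  nlinarith [sq_nonneg (x - p*k*t^6)]

lemma cs_class {ι : Type*} [Fintype ι] (P : ι → Prop) [DecidablePred P] (g : ι → ℝ) :
    (∑ v, if P v then g v else 0)^2 ≤ (Fintype.card ι) * ∑ v, if P v then g v ^2 else 0 := by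
  have h := Finset.sum_mul_sq_le_sq_mul_sq Finset.univ
    (fun v => if P v then (1:ℝ) else 0) (fun v => if P v then g v else 0)
  have e1 : ∑ v, (if P v then (1:ℝ) else 0) * (if P v then g v else 0)
      = ∑ v, if P v then g v else 0 := by
    apply Finset.sum_congr rfl; intro v _; split_ifs <;> ring
  have e2 : ∑ v, ((if P v then (1:ℝ) else 0))^2 ≤ (Fintype.card ι : ℝ) := by
    calc ∑ v, ((if P v then (1:ℝ) else 0))^2 ≤ ∑ _v : ι, (1:ℝ) := by
          apply Finset.sum_le_sum; intro v _; split_ifs <;> norm_num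
      _ = (Fintype.card ι : ℝ) := by rw [Finset.sum_const, Finset.card_univ]; simp
  have e3 : ∑ v, ((if P v then g v else 0))^2 = ∑ v, if P v then g v ^2 else 0 := by
    apply Finset.sum_congr rfl; intro v _; split_ifs <;> simp
  rw [e1, e3] at h
  have hnn : 0 ≤ ∑ v, if P v then g v ^2 else 0 := by
    apply Finset.sum_nonneg; intro v _; split_ifs; exacts [sq_nonneg _, le_rfl]
  calc (∑ v, if P v then g v else 0)^2 ≤ (∑ v, ((if P v then (1:ℝ) else 0))^2) * ∑ v, if P v then g v ^2 else 0 := h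
    _ ≤ (Fintype.card ι) * ∑ v, if P v then g v ^2 else 0 := by
        apply mul_le_mul_of_nonneg_right e2 hnn

lemma sym2_sum {V : Type*} [Fintype V] [DecidableEq V] (u w : V) (h : u ≠ w) (g : V → ℝ) :
    ∑ v, (if v ∈ (s(u,w) : Sym2 V) then g v else 0) = g u + g w := by
  have : ∀ v : V, (if v ∈ (s(u,w) : Sym2 V) then g v else 0)
      = (if v ∈ ({u, w} : Finset V) then g v else 0) := by
    intro v; congr 1; simp [Sym2.mem_iff]
  rw [Finset.sum_congr rfl (fun v _ => this v), Finset.sum_ite_mem, Finset.univ_inter,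
    Finset.sum_pair h]

lemma pair_le_sum {ι : Type*} [Fintype ι] [DecidableEq ι] (f : ι → ℝ) (h : ∀ i, 0 ≤ f i)
    {a b : ι} (hab : a ≠ b) : f a + f b ≤ ∑ i, f i := by
  rw [← Finset.sum_pair hab]
  apply Finset.sum_le_sum_of_subset_of_nonneg (Finset.subset_univ _)
  intro i _ _; exact h i

lemma fin3_exists_ne (a b : Fin 3) : ∃ c : Fin 3, c ≠ a ∧ c ≠ b := by revert a b; decide

end Helpers

section Setup
variable {V : Type*} [Fintype V] [DecidableEq V] (G : SimpleGraph V) [DecidableRel G.Adj]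

/-- squared column norm -/
def colSq {α γ : Type*} [Fintype α] [Fintype γ] (X : Matrix α γ ℝ) (c : γ) : ℝ :=
  ∑ r, X r c ^ 2

lemma frobSq_eq {α γ : Type*} [Fintype α] [Fintype γ] (X : Matrix α γ ℝ) :
    (∑ i, ∑ j, X i j ^ 2) = ∑ c, colSq X c := Finset.sum_comm

lemma colSq_nonneg {α γ : Type*} [Fintype α] [Fintype γ] (X : Matrix α γ ℝ) (c : γ) :
    0 ≤ colSq X c := Finset.sum_nonneg fun r _ => sq_nonneg _

def embφ (φ : V → Fin 3) : V ↪ ((V × Fin 3) ⊕ G.edgeSet) :=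
  ⟨fun v => Sum.inl (v, φ v), fun a b h => by
    have := Sum.inl.inj h; exact congrArg Prod.fst this⟩

def VSet (φ : V → Fin 3) : Finset ((V × Fin 3) ⊕ G.edgeSet) :=
  Finset.univ.map (embφ G φ)

lemma mem_VSet (φ : V → Fin 3) (v : V) : Sum.inl (v, φ v) ∈ VSet G φ := by
  simp [VSet, embφ, Finset.mem_map]; exact ⟨v, rfl⟩

lemma card_VSet (φ : V → Fin 3) : (VSet G φ).card = Fintype.card V := by
  simp [VSet]

lemma mem_VSet_iff (φ : V → Fin 3) (c : (V × Fin 3) ⊕ G.edgeSet) :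
    c ∈ VSet G φ ↔ ∃ v : V, c = Sum.inl (v, φ v) := by
  simp only [VSet, Finset.mem_map, Finset.mem_univ, true_and, embφ,
    Function.Embedding.coeFn_mk]
  exact ⟨fun ⟨v, h⟩ => ⟨v, h.symm⟩, fun ⟨v, h⟩ => ⟨v, h.symm⟩⟩

/-- converting the matrix product over the selected-column subtype to a sum over `V`. -/
lemma mul_apply_VSet (φ : V → Fin 3) (t : ℝ)
    (A : Matrix ↥(VSet G φ) ((V × Fin 3) ⊕ G.edgeSet) ℝ)
    (r : V ⊕ Fin 3 ⊕ Unit) (c : (V × Fin 3) ⊕ G.edgeSet) :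
    (Matrix.of (fun r (c : ↥(VSet G φ)) => MG G t r c.val) * A) r c
      = ∑ v : V, MG G t r (Sum.inl (v, φ v)) * A ⟨Sum.inl (v, φ v), mem_VSet G φ v⟩ c := by
  rw [Matrix.mul_apply]
  apply (Fintype.sum_bijective (fun v : V => (⟨Sum.inl (v, φ v), mem_VSet G φ v⟩ : ↥(VSet G φ)))
    ?_ _ _ ?_).symm
  · constructor
    · intro a b h
      have := congrArg Subtype.val h
      have := Sum.inl.inj this
      exact congrArg Prod.fst this
    · rintro ⟨p, hp⟩
      obtain ⟨v, rfl⟩ := (mem_VSet_iff G φ p).mp hp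
      exact ⟨v, rfl⟩
  · intro v; rfl

end Setup

section RowSums
variable {V : Type*} [Fintype V] [DecidableEq V] (G : SimpleGraph V) [DecidableRel G.Adj]
  (t : ℝ) (φ : V → Fin 3) (f : V → ℝ)

lemma row_sum_inl (u : V) :
    ∑ v : V, MG G t (Sum.inl u) (Sum.inl (v, φ v)) * f v = f u := by
  have : ∀ v : V, MG G t (Sum.inl u) (Sum.inl (v, φ v)) * f v
      = if u = v then f v else 0 := by
    intro v; show (if u = v then (1:ℝ) else 0) * f v = _; split_ifs <;> ring
  rw [Finset.sum_congr rfl (fun v _ => this v), Finset.sum_ite_eq]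
  simp

lemma row_sum_color (i : Fin 3) :
    ∑ v : V, MG G t (Sum.inr (Sum.inl i)) (Sum.inl (v, φ v)) * f v
      = t^3 * ∑ v : V, (if φ v = i then f v else 0) := by
  rw [Finset.mul_sum]
  apply Finset.sum_congr rfl
  intro v _
  show (if i = φ v then t^3 else 0) * f v = t^3 * (if φ v = i then f v else 0)
  rcases eq_or_ne i (φ v) with h | h
  · rw [if_pos h, if_pos h.symm]
  · rw [if_neg h, if_neg (Ne.symm h)]; ring

lemma row_sum_eps :
    ∑ v : V, MG G t (Sum.inr (Sum.inr ())) (Sum.inl (v, φ v)) * f v = 0 := by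
  apply Finset.sum_eq_zero; intro v _
  show (0:ℝ) * f v = 0; ring

end RowSums

set_option linter.unusedSectionVars false
set_option linter.unusedVariables false

section Fin3
variable (t : ℝ)

lemma fin3A (j k : Fin 3) :
    ∑ i : Fin 3, ((if i = j then t^3 else 0) - t^3 * (if k = i then 1 else 0))^2
      = if j = k then 0 else 2*t^6 := by
  fin_cases j <;> fin_cases k <;>
    (simp only [Fin.sum_univ_three]; norm_num [Fin.ext_iff]; try ring)

lemma fin3B (a b : Fin 3) (h : a ≠ b) :
    ∑ i : Fin 3, (t^5 - t^3*((if a = i then t^2 else 0) + (if b = i then t^2 else 0)))^2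
      = t^10 := by
  fin_cases a <;> fin_cases b <;> first
    | exact absurd rfl h
    | (simp only [Fin.sum_univ_three]; norm_num [Fin.ext_iff]; try ring)

lemma fin3C (a : Fin 3) (K : ℝ) :
    ∑ j : Fin 3, (if j = a then 0 else K) = 2*K := by
  fin_cases a <;> (simp only [Fin.sum_univ_three]; norm_num [Fin.ext_iff]; try ring)

lemma fin3D (a b : Fin 3) :
    ∑ i : Fin 3, (((if a = i then (1:ℝ) else 0) + (if b = i then 1 else 0) - 1))^2
      = if a = b then 3 else 1 := by
  fin_cases a <;> fin_cases b <;>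
    (simp only [Fin.sum_univ_three]; norm_num [Fin.ext_iff]; try ring)

end Fin3

section Forward
variable {V : Type*} [Fintype V] [DecidableEq V] (G : SimpleGraph V) [DecidableRel G.Adj]
  (t : ℝ) (φ : V → Fin 3)

lemma colSq_split {γ : Type*} [Fintype γ] (X : Matrix (V ⊕ Fin 3 ⊕ Unit) γ ℝ) (c : γ) :
    colSq X c = (∑ v, X (Sum.inl v) c^2)
      + ((∑ i : Fin 3, X (Sum.inr (Sum.inl i)) c^2) + X (Sum.inr (Sum.inr ())) c^2) := by
  unfold colSq
  rw [Fintype.sum_sum_type, Fintype.sum_sum_type]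
  congr 2
  exact Fintype.sum_unique _

lemma sum_ite_swap (i : Fin 3) (w : V) (g : V → ℝ) :
    ∑ v, (if φ v = i then (if v = w then g v else 0) else 0)
      = if φ w = i then g w else 0 := by
  have h : ∀ v, (if φ v = i then (if v = w then g v else 0) else 0)
      = (if v = w then (if φ v = i then g v else 0) else 0) := by
    intro v; split_ifs <;> rfl
  rw [Finset.sum_congr rfl (fun v _ => h v), Finset.sum_ite_eq']
  simp

lemma sum_ite_swap_edge (i : Fin 3) (u w : V) (huw : u ≠ w) (g : V → ℝ) :
    ∑ v, (if φ v = i then (if v ∈ (s(u,w) : Sym2 V) then g v else 0) else 0)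
      = (if φ u = i then g u else 0) + (if φ w = i then g w else 0) := by
  have h : ∀ v, (if φ v = i then (if v ∈ (s(u,w) : Sym2 V) then g v else 0) else 0)
      = (if v ∈ (s(u,w) : Sym2 V) then (if φ v = i then g v else 0) else 0) := by
    intro v; split_ifs <;> rfl
  rw [Finset.sum_congr rfl (fun v _ => h v), sym2_sum u w huw]

def Afwd : Matrix ↥(VSet G φ) ((V × Fin 3) ⊕ G.edgeSet) ℝ :=
  fun p c =>
    match p.1, c with
    | Sum.inl (v, _), Sum.inl (w, _) => if v = w then 1 else 0
    | Sum.inl (v, _), Sum.inr e => if v ∈ (e : Sym2 V) then t^2 else 0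
    | Sum.inr _, _ => 0

lemma colSq_fwd_vertex (w : V) (j : Fin 3) :
    colSq (MG G t - Matrix.of (fun r (c : ↥(VSet G φ)) => MG G t r c.val) * Afwd G t φ)
      (Sum.inl (w, j)) = if j = φ w then 0 else 2*t^6 := by
  set X := MG G t - Matrix.of (fun r (c : ↥(VSet G φ)) => MG G t r c.val) * Afwd G t φ with hX
  have hV : ∀ v : V, X (Sum.inl v) (Sum.inl (w, j)) = 0 := by
    intro v
    rw [hX, Matrix.sub_apply, mul_apply_VSet]
    have : ∑ v' : V, MG G t (Sum.inl v) (Sum.inl (v', φ v'))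
        * Afwd G t φ ⟨Sum.inl (v', φ v'), mem_VSet G φ v'⟩ (Sum.inl (w, j))
        = if v = w then 1 else 0 := by
      calc ∑ v' : V, MG G t (Sum.inl v) (Sum.inl (v', φ v'))
            * Afwd G t φ ⟨Sum.inl (v', φ v'), mem_VSet G φ v'⟩ (Sum.inl (w, j))
          = ∑ v' : V, MG G t (Sum.inl v) (Sum.inl (v', φ v'))
            * (if v' = w then 1 else 0) := Finset.sum_congr rfl (fun v' _ => rfl)
        _ = if v = w then 1 else 0 :=
            row_sum_inl G t φ (fun v' => if v' = w then 1 else 0) v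
    rw [this]
    show (if v = w then (1:ℝ) else 0) - _ = 0
    ring
  have hC : ∀ i : Fin 3, X (Sum.inr (Sum.inl i)) (Sum.inl (w, j))
      = (if i = j then t^3 else 0) - t^3 * (if φ w = i then 1 else 0) := by
    intro i
    rw [hX, Matrix.sub_apply, mul_apply_VSet]
    have : ∑ v' : V, MG G t (Sum.inr (Sum.inl i)) (Sum.inl (v', φ v'))
        * Afwd G t φ ⟨Sum.inl (v', φ v'), mem_VSet G φ v'⟩ (Sum.inl (w, j))
        = t^3 * (if φ w = i then 1 else 0) := by
      calc ∑ v' : V, MG G t (Sum.inr (Sum.inl i)) (Sum.inl (v', φ v'))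
            * Afwd G t φ ⟨Sum.inl (v', φ v'), mem_VSet G φ v'⟩ (Sum.inl (w, j))
          = ∑ v' : V, MG G t (Sum.inr (Sum.inl i)) (Sum.inl (v', φ v'))
            * (if v' = w then 1 else 0) := Finset.sum_congr rfl (fun v' _ => rfl)
        _ = t^3 * ∑ v' : V, (if φ v' = i then (if v' = w then 1 else 0) else 0) :=
            row_sum_color G t φ (fun v' => if v' = w then 1 else 0) i
        _ = t^3 * (if φ w = i then 1 else 0) := by rw [sum_ite_swap]
    rw [this]
    rfl
  have hE : X (Sum.inr (Sum.inr ())) (Sum.inl (w, j)) = 0 := by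
    rw [hX, Matrix.sub_apply, mul_apply_VSet]
    have : ∑ v' : V, MG G t (Sum.inr (Sum.inr ())) (Sum.inl (v', φ v'))
        * Afwd G t φ ⟨Sum.inl (v', φ v'), mem_VSet G φ v'⟩ (Sum.inl (w, j)) = 0 := by
      calc ∑ v' : V, MG G t (Sum.inr (Sum.inr ())) (Sum.inl (v', φ v'))
            * Afwd G t φ ⟨Sum.inl (v', φ v'), mem_VSet G φ v'⟩ (Sum.inl (w, j))
          = ∑ v' : V, MG G t (Sum.inr (Sum.inr ())) (Sum.inl (v', φ v'))
            * (if v' = w then 1 else 0) := Finset.sum_congr rfl (fun v' _ => rfl)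
        _ = 0 := row_sum_eps G t φ (fun v' => if v' = w then 1 else 0)
    rw [this]
    show (0:ℝ) - 0 = 0
    ring
  have e1 : ∑ v, X (Sum.inl v) (Sum.inl (w, j)) ^2 = 0 :=
    Finset.sum_eq_zero (fun v _ => by rw [hV v]; norm_num)
  have e2 : ∑ i : Fin 3, X (Sum.inr (Sum.inl i)) (Sum.inl (w, j)) ^2
      = if j = φ w then 0 else 2*t^6 := by
    calc ∑ i : Fin 3, X (Sum.inr (Sum.inl i)) (Sum.inl (w, j)) ^2
        = ∑ i : Fin 3, ((if i = j then t^3 else 0) - t^3 * (if φ w = i then 1 else 0))^2 :=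
          Finset.sum_congr rfl (fun i _ => by rw [hC i])
      _ = if j = φ w then 0 else 2*t^6 := fin3A t j (φ w)
  rw [colSq_split, e1, e2, hE]
  ring

lemma colSq_fwd_edge (hφ : ∀ u v, G.Adj u v → φ u ≠ φ v) (e : Sym2 V) (he : e ∈ G.edgeSet) :
    colSq (MG G t - Matrix.of (fun r (c : ↥(VSet G φ)) => MG G t r c.val) * Afwd G t φ)
      (Sum.inr ⟨e, he⟩) = t^2 + t^10 := by
  set X := MG G t - Matrix.of (fun r (c : ↥(VSet G φ)) => MG G t r c.val) * Afwd G t φ with hX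
  induction e using Sym2.ind with
  | _ u w =>
  have hadj : G.Adj u w := (SimpleGraph.mem_edgeSet G).mp he
  have huw : u ≠ w := hadj.ne
  have hV : ∀ v : V, X (Sum.inl v) (Sum.inr ⟨s(u,w), he⟩) = 0 := by
    intro v
    rw [hX, Matrix.sub_apply, mul_apply_VSet]
    have : ∑ v' : V, MG G t (Sum.inl v) (Sum.inl (v', φ v'))
        * Afwd G t φ ⟨Sum.inl (v', φ v'), mem_VSet G φ v'⟩ (Sum.inr ⟨s(u,w), he⟩)
        = if v ∈ (s(u,w) : Sym2 V) then t^2 else 0 := by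
      calc ∑ v' : V, MG G t (Sum.inl v) (Sum.inl (v', φ v'))
            * Afwd G t φ ⟨Sum.inl (v', φ v'), mem_VSet G φ v'⟩ (Sum.inr ⟨s(u,w), he⟩)
          = ∑ v' : V, MG G t (Sum.inl v) (Sum.inl (v', φ v'))
            * (if v' ∈ (s(u,w) : Sym2 V) then t^2 else 0) := Finset.sum_congr rfl (fun v' _ => rfl)
        _ = _ := row_sum_inl G t φ (fun v' => if v' ∈ (s(u,w) : Sym2 V) then t^2 else 0) v
    rw [this]
    show (if v ∈ (s(u,w) : Sym2 V) then t^2 else 0) - _ = 0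
    ring
  have hC : ∀ i : Fin 3, X (Sum.inr (Sum.inl i)) (Sum.inr ⟨s(u,w), he⟩)
      = t^5 - t^3 * ((if φ u = i then t^2 else 0) + (if φ w = i then t^2 else 0)) := by
    intro i
    rw [hX, Matrix.sub_apply, mul_apply_VSet]
    have : ∑ v' : V, MG G t (Sum.inr (Sum.inl i)) (Sum.inl (v', φ v'))
        * Afwd G t φ ⟨Sum.inl (v', φ v'), mem_VSet G φ v'⟩ (Sum.inr ⟨s(u,w), he⟩)
        = t^3 * ((if φ u = i then t^2 else 0) + (if φ w = i then t^2 else 0)) := by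
      calc ∑ v' : V, MG G t (Sum.inr (Sum.inl i)) (Sum.inl (v', φ v'))
            * Afwd G t φ ⟨Sum.inl (v', φ v'), mem_VSet G φ v'⟩ (Sum.inr ⟨s(u,w), he⟩)
          = ∑ v' : V, MG G t (Sum.inr (Sum.inl i)) (Sum.inl (v', φ v'))
            * (if v' ∈ (s(u,w) : Sym2 V) then t^2 else 0) := Finset.sum_congr rfl (fun v' _ => rfl)
        _ = t^3 * ∑ v' : V, (if φ v' = i then (if v' ∈ (s(u,w) : Sym2 V) then t^2 else 0) else 0) :=
            row_sum_color G t φ _ i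
        _ = t^3 * ((if φ u = i then t^2 else 0) + (if φ w = i then t^2 else 0)) := by
            rw [sum_ite_swap_edge φ i u w huw]
    rw [this]
    rfl
  have hE : X (Sum.inr (Sum.inr ())) (Sum.inr ⟨s(u,w), he⟩) = t := by
    rw [hX, Matrix.sub_apply, mul_apply_VSet]
    have : ∑ v' : V, MG G t (Sum.inr (Sum.inr ())) (Sum.inl (v', φ v'))
        * Afwd G t φ ⟨Sum.inl (v', φ v'), mem_VSet G φ v'⟩ (Sum.inr ⟨s(u,w), he⟩) = 0 := by
      calc ∑ v' : V, MG G t (Sum.inr (Sum.inr ())) (Sum.inl (v', φ v'))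
            * Afwd G t φ ⟨Sum.inl (v', φ v'), mem_VSet G φ v'⟩ (Sum.inr ⟨s(u,w), he⟩)
          = ∑ v' : V, MG G t (Sum.inr (Sum.inr ())) (Sum.inl (v', φ v'))
            * (if v' ∈ (s(u,w) : Sym2 V) then t^2 else 0) := Finset.sum_congr rfl (fun v' _ => rfl)
        _ = 0 := row_sum_eps G t φ _
    rw [this]
    show t - (0:ℝ) = t
    ring
  have e1 : ∑ v, X (Sum.inl v) (Sum.inr ⟨s(u,w), he⟩) ^2 = 0 :=
    Finset.sum_eq_zero (fun v _ => by rw [hV v]; norm_num)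
  have e2 : ∑ i : Fin 3, X (Sum.inr (Sum.inl i)) (Sum.inr ⟨s(u,w), he⟩) ^2 = t^10 := by
    calc ∑ i : Fin 3, X (Sum.inr (Sum.inl i)) (Sum.inr ⟨s(u,w), he⟩) ^2
        = ∑ i : Fin 3, (t^5 - t^3*((if φ u = i then t^2 else 0) + (if φ w = i then t^2 else 0)))^2 :=
          Finset.sum_congr rfl (fun i _ => by rw [hC i])
      _ = t^10 := fin3B t (φ u) (φ w) (hφ u w hadj)
  rw [colSq_split, e1, e2, hE]
  ring

lemma fwd_total (hφ : ∀ u v, G.Adj u v → φ u ≠ φ v) :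
    (∑ i, ∑ j, ((MG G t - Matrix.of (fun r (c : ↥(VSet G φ)) => MG G t r c.val) * Afwd G t φ) i j)^2)
    = (Fintype.card G.edgeSet : ℝ) * t^2 + 4*(Fintype.card V : ℝ)*t^6
      + (Fintype.card G.edgeSet : ℝ) * t^10 := by
  rw [frobSq_eq, Fintype.sum_sum_type]
  have h1 : ∑ p : V × Fin 3, colSq (MG G t - Matrix.of (fun r (c : ↥(VSet G φ)) => MG G t r c.val) * Afwd G t φ) (Sum.inl p)
      = 4*(Fintype.card V : ℝ)*t^6 := by
    rw [Fintype.sum_prod_type]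
    have h0 : ∀ w : V, ∑ j : Fin 3, colSq (MG G t - Matrix.of (fun r (c : ↥(VSet G φ)) => MG G t r c.val) * Afwd G t φ) (Sum.inl (w, j))
        = 2*(2*t^6) := by
      intro w
      rw [Finset.sum_congr rfl (fun j _ => colSq_fwd_vertex G t φ w j), fin3C]
    rw [Finset.sum_congr rfl (fun w _ => h0 w), Finset.sum_const, Finset.card_univ,
      nsmul_eq_mul]
    ring
  have h2 : ∑ e : G.edgeSet, colSq (MG G t - Matrix.of (fun r (c : ↥(VSet G φ)) => MG G t r c.val) * Afwd G t φ) (Sum.inr e)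
      = (Fintype.card G.edgeSet : ℝ) * (t^2 + t^10) := by
    have h0 : ∀ e : G.edgeSet, colSq (MG G t - Matrix.of (fun r (c : ↥(VSet G φ)) => MG G t r c.val) * Afwd G t φ) (Sum.inr e)
        = t^2 + t^10 := by
      rintro ⟨e, he⟩
      exact colSq_fwd_edge G t φ hφ e he
    rw [Finset.sum_congr rfl (fun e _ => h0 e), Finset.sum_const, Finset.card_univ,
      nsmul_eq_mul]
  rw [h1, h2]
  ring

end Forward

section BackwardA
variable {V : Type*} [Fintype V] [DecidableEq V] (G : SimpleGraph V) [DecidableRel G.Adj]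
  (t : ℝ) (φ : V → Fin 3) (A : Matrix ↥(VSet G φ) ((V × Fin 3) ⊕ G.edgeSet) ℝ)

lemma bwd_entry_inl (c : (V × Fin 3) ⊕ G.edgeSet) (v : V) :
    (MG G t - Matrix.of (fun r (c : ↥(VSet G φ)) => MG G t r c.val) * A) (Sum.inl v) c
      = MG G t (Sum.inl v) c - A ⟨Sum.inl (v, φ v), mem_VSet G φ v⟩ c := by
  rw [Matrix.sub_apply, mul_apply_VSet,
    row_sum_inl G t φ (fun v' => A ⟨Sum.inl (v', φ v'), mem_VSet G φ v'⟩ c) v]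

lemma bwd_entry_color (c : (V × Fin 3) ⊕ G.edgeSet) (i : Fin 3) :
    (MG G t - Matrix.of (fun r (c : ↥(VSet G φ)) => MG G t r c.val) * A) (Sum.inr (Sum.inl i)) c
      = MG G t (Sum.inr (Sum.inl i)) c
        - t^3 * ∑ v, (if φ v = i then A ⟨Sum.inl (v, φ v), mem_VSet G φ v⟩ c else 0) := by
  rw [Matrix.sub_apply, mul_apply_VSet,
    row_sum_color G t φ (fun v' => A ⟨Sum.inl (v', φ v'), mem_VSet G φ v'⟩ c) i]

lemma bwd_entry_eps (c : (V × Fin 3) ⊕ G.edgeSet) :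
    (MG G t - Matrix.of (fun r (c : ↥(VSet G φ)) => MG G t r c.val) * A) (Sum.inr (Sum.inr ())) c
      = MG G t (Sum.inr (Sum.inr ())) c := by
  rw [Matrix.sub_apply, mul_apply_VSet,
    row_sum_eps G t φ (fun v' => A ⟨Sum.inl (v', φ v'), mem_VSet G φ v'⟩ c)]
  ring

lemma bwd_vertex_lb (hV : 0 < (Fintype.card V : ℝ)) (w : V) (j : Fin 3) (hj : j ≠ φ w) :
    2*t^6 - 2*(Fintype.card V : ℝ)*t^12
      ≤ colSq (MG G t - Matrix.of (fun r (c : ↥(VSet G φ)) => MG G t r c.val) * A)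
        (Sum.inl (w, j)) := by
  set X := MG G t - Matrix.of (fun r (c : ↥(VSet G φ)) => MG G t r c.val) * A with hX
  set c : (V × Fin 3) ⊕ G.edgeSet := Sum.inl (w, j) with hc
  set a : V → ℝ := fun v => A ⟨Sum.inl (v, φ v), mem_VSet G φ v⟩ c with ha
  set g : V → ℝ := fun v => (if v = w then 1 else 0) - a v with hg
  have hgv : ∀ v, X (Sum.inl v) c = g v := by
    intro v
    rw [hX, bwd_entry_inl]
    rfl
  set Aj : ℝ := ∑ v, (if φ v = j then a v else 0) with hAj
  set Aw : ℝ := ∑ v, (if φ v = φ w then a v else 0) with hAw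
  have hrowj : X (Sum.inr (Sum.inl j)) c = t^3 - t^3 * Aj := by
    rw [hX, bwd_entry_color]
    show (if j = j then t^3 else 0) - _ = _
    rw [if_pos rfl]
  have hroww : X (Sum.inr (Sum.inl (φ w))) c = 0 - t^3 * Aw := by
    rw [hX, bwd_entry_color]
    show (if φ w = j then t^3 else 0) - _ = _
    rw [if_neg (fun h => hj h.symm)]
  -- class sums of g
  have hxj : ∑ v, (if φ v = j then g v else 0) = - Aj := by
    have hpt : ∀ v, (if φ v = j then g v else 0)
        = (if φ v = j then (if v = w then 1 else 0) else 0) - (if φ v = j then a v else 0) := by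
      intro v
      rcases eq_or_ne (φ v) j with h | h
      · rw [hg]; simp [h]
      · simp [h]
    rw [Finset.sum_congr rfl (fun v _ => hpt v), Finset.sum_sub_distrib,
      sum_ite_swap φ j w (fun _ => 1), if_neg (fun h => hj h.symm), hAj]
    ring
  have hxw : ∑ v, (if φ v = φ w then g v else 0) = 1 - Aw := by
    have hpt : ∀ v, (if φ v = φ w then g v else 0)
        = (if φ v = φ w then (if v = w then 1 else 0) else 0) - (if φ v = φ w then a v else 0) := by
      intro v
      rcases eq_or_ne (φ v) (φ w) with h | h
      · rw [hg]; simp [h]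
      · simp [h]
    rw [Finset.sum_congr rfl (fun v _ => hpt v), Finset.sum_sub_distrib,
      sum_ite_swap φ (φ w) w (fun _ => 1), if_pos rfl, hAw]
  -- Cauchy-Schwarz per class
  have csj := cs_class (fun v => φ v = j) g
  have csw := cs_class (fun v => φ v = φ w) g
  rw [hxj] at csj
  rw [hxw] at csw
  have keyj := key_ineq t (Fintype.card V) (∑ v, (if φ v = j then g v ^2 else 0)) (-Aj) (-1) hV
    (by rw [neg_sq]; simpa using csj)
  have keyw := key_ineq t (Fintype.card V) (∑ v, (if φ v = φ w then g v ^2 else 0)) (1 - Aw) 1 hV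
    (by simpa using csw)
  -- assemble
  rw [colSq_split]
  have h1 : (∑ v, (if φ v = j then g v ^2 else 0)) + (∑ v, (if φ v = φ w then g v ^2 else 0))
      ≤ ∑ v, X (Sum.inl v) c ^2 := by
    rw [← Finset.sum_add_distrib]
    apply Finset.sum_le_sum
    intro v _
    rw [hgv v]
    split_ifs with h1 h2
    · exact absurd (h1.symm.trans h2) hj
    · simp
    · simp
    · simp [sq_nonneg]
  have h2 : (t^3 - t^3*Aj)^2 + (0 - t^3*Aw)^2 ≤ ∑ i : Fin 3, X (Sum.inr (Sum.inl i)) c ^2 := by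
    rw [← hrowj, ← hroww]
    exact pair_le_sum (fun i : Fin 3 => X (Sum.inr (Sum.inl i)) c ^2) (fun i => sq_nonneg _) hj
  have h3 : (0:ℝ) ≤ X (Sum.inr (Sum.inr ())) c ^2 := sq_nonneg _
  have e1 : (t^3 - t^3*Aj)^2 = t^6 * ((-Aj) - (-1))^2 := by ring
  have e2 : (0 - t^3*Aw)^2 = t^6 * ((1 - Aw) - 1)^2 := by ring
  nlinarith [keyj, keyw, h1, h2, h3]

lemma bwd_edge_lb (hV : 0 < (Fintype.card V : ℝ)) (u w : V) (hadj : G.Adj u w)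
    (he : s(u,w) ∈ G.edgeSet) :
    t^2 + (if φ u = φ w then 3 else 1) * (t^10 - (Fintype.card V : ℝ)*t^16)
      ≤ colSq (MG G t - Matrix.of (fun r (c : ↥(VSet G φ)) => MG G t r c.val) * A)
        (Sum.inr ⟨s(u,w), he⟩) := by
  have huw : u ≠ w := hadj.ne
  set X := MG G t - Matrix.of (fun r (c : ↥(VSet G φ)) => MG G t r c.val) * A with hX
  set c : (V × Fin 3) ⊕ G.edgeSet := Sum.inr ⟨s(u,w), he⟩ with hc
  set a : V → ℝ := fun v => A ⟨Sum.inl (v, φ v), mem_VSet G φ v⟩ c with ha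
  set g : V → ℝ := fun v => (if v ∈ (s(u,w) : Sym2 V) then t^2 else 0) - a v with hg
  have hgv : ∀ v, X (Sum.inl v) c = g v := by
    intro v
    rw [hX, bwd_entry_inl]
    rfl
  set Acl : Fin 3 → ℝ := fun i => ∑ v, (if φ v = i then a v else 0) with hAcl
  have hrow : ∀ i, X (Sum.inr (Sum.inl i)) c = t^5 - t^3 * Acl i := by
    intro i
    rw [hX, bwd_entry_color]
    rfl
  have heps : X (Sum.inr (Sum.inr ())) c = t := by
    rw [hX, bwd_entry_eps]
    rfl
  -- class sums
  set x : Fin 3 → ℝ := fun i =>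
    ((if φ u = i then t^2 else 0) + (if φ w = i then t^2 else 0)) - Acl i with hx
  have hxi : ∀ i, ∑ v, (if φ v = i then g v else 0) = x i := by
    intro i
    have hpt : ∀ v, (if φ v = i then g v else 0)
        = (if φ v = i then (if v ∈ (s(u,w) : Sym2 V) then t^2 else 0) else 0)
          - (if φ v = i then a v else 0) := by
      intro v
      rcases eq_or_ne (φ v) i with h | h
      · rw [hg]; simp [h]
      · simp [h]
    rw [Finset.sum_congr rfl (fun v _ => hpt v), Finset.sum_sub_distrib,
      sum_ite_swap_edge φ i u w huw (fun _ => t^2)]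
  set p : Fin 3 → ℝ := fun i =>
    ((if φ u = i then 1 else 0) + (if φ w = i then 1 else 0) - 1) * t^2 with hp
  have hcost : ∀ i, (∑ v, (if φ v = i then g v ^2 else 0)) + t^6*(x i - p i)^2
      ≥ (p i)^2*t^6 - (p i)^2*(Fintype.card V : ℝ)*t^12 := by
    intro i
    have cs := cs_class (fun v => φ v = i) g
    rw [hxi i] at cs
    exact key_ineq t (Fintype.card V) _ (x i) (p i) hV cs
  -- rows V sum equals sum of class costs
  have hpart : ∑ v, g v ^2 = ∑ i : Fin 3, ∑ v, (if φ v = i then g v ^2 else 0) := by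
    rw [Finset.sum_comm]
    apply Finset.sum_congr rfl
    intro v _
    rw [Finset.sum_ite_eq]
    simp
  -- color rows
  have hrowsq : ∀ i, X (Sum.inr (Sum.inl i)) c ^2 = t^6 * (x i - p i)^2 := by
    intro i
    have e1 : (if φ u = i then t^2 else 0) = (if φ u = i then (1:ℝ) else 0) * t^2 := by
      split_ifs <;> ring
    have e2 : (if φ w = i then t^2 else 0) = (if φ w = i then (1:ℝ) else 0) * t^2 := by
      split_ifs <;> ring
    rw [hrow i]
    simp only [hx, hp]
    rw [e1, e2]
    ring
  -- sum of p squared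
  have hpsum : ∑ i : Fin 3, (p i)^2 = (if φ u = φ w then 3 else 1) * t^4 := by
    have : ∀ i, (p i)^2 = ((if φ u = i then (1:ℝ) else 0) + (if φ w = i then 1 else 0) - 1)^2 * t^4 := by
      intro i; rw [hp]; ring
    rw [Finset.sum_congr rfl (fun i _ => this i), ← Finset.sum_mul, fin3D]
  -- assemble
  have es1 : ∑ v, X (Sum.inl v) c ^2 = ∑ v, g v ^2 :=
    Finset.sum_congr rfl (fun v _ => by rw [hgv v])
  have es2 : ∑ i : Fin 3, X (Sum.inr (Sum.inl i)) c ^2 = ∑ i : Fin 3, t^6 * (x i - p i)^2 :=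
    Finset.sum_congr rfl (fun i _ => hrowsq i)
  rw [colSq_split, es1, es2, heps, hpart]
  have key : ∑ i : Fin 3, ((∑ v, (if φ v = i then g v ^2 else 0)) + t^6*(x i - p i)^2)
      ≥ ∑ i : Fin 3, ((p i)^2*t^6 - (p i)^2*(Fintype.card V : ℝ)*t^12) :=
    Finset.sum_le_sum (fun i _ => hcost i)
  rw [Finset.sum_add_distrib] at key
  have expand : ∑ i : Fin 3, ((p i)^2*t^6 - (p i)^2*(Fintype.card V : ℝ)*t^12)
      = (∑ i : Fin 3, (p i)^2) * (t^6 - (Fintype.card V : ℝ)*t^12) := by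
    rw [Finset.sum_mul]
    apply Finset.sum_congr rfl
    intro i _
    ring
  rw [expand, hpsum] at key
  have : (if φ u = φ w then (3:ℝ) else 1) * t^4 * (t^6 - (Fintype.card V : ℝ)*t^12)
      = (if φ u = φ w then (3:ℝ) else 1) * (t^10 - (Fintype.card V : ℝ)*t^16) := by
    split_ifs <;> ring
  rw [this] at key
  linarith [key, sq_nonneg t]

end BackwardA


lemma bwd_caseA_total {V : Type*} [Fintype V] [DecidableEq V] (G : SimpleGraph V)
    [DecidableRel G.Adj] (t : ℝ) (φ : V → Fin 3)
    (A : Matrix ↥(VSet G φ) ((V × Fin 3) ⊕ G.edgeSet) ℝ)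
    (hV : 0 < (Fintype.card V : ℝ))
    (hK : 0 ≤ t^10 - (Fintype.card V : ℝ)*t^16)
    (u0 w0 : V) (hadj : G.Adj u0 w0) (hmono : φ u0 = φ w0) :
    (Fintype.card V : ℝ) * (2*(2*t^6 - 2*(Fintype.card V : ℝ)*t^12))
      + ((Fintype.card G.edgeSet : ℝ) * (t^2 + (t^10 - (Fintype.card V : ℝ)*t^16))
        + 2*(t^10 - (Fintype.card V : ℝ)*t^16))
      ≤ ∑ i, ∑ j, ((MG G t
          - Matrix.of (fun r (c : ↥(VSet G φ)) => MG G t r c.val) * A) i j)^2 := by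
  set n : ℝ := (Fintype.card V : ℝ)
  set K : ℝ := t^10 - n*t^16 with hKdef
  set X := MG G t - Matrix.of (fun r (c : ↥(VSet G φ)) => MG G t r c.val) * A with hX
  rw [frobSq_eq, Fintype.sum_sum_type]
  have hvert : n * (2*(2*t^6 - 2*n*t^12)) ≤ ∑ p : V × Fin 3, colSq X (Sum.inl p) := by
    rw [Fintype.sum_prod_type]
    have per : ∀ w : V, 2*(2*t^6 - 2*n*t^12) ≤ ∑ j : Fin 3, colSq X (Sum.inl (w, j)) := by
      intro w
      calc 2*(2*t^6 - 2*n*t^12)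
          = ∑ j : Fin 3, (if j = φ w then 0 else 2*t^6 - 2*n*t^12) := (fin3C (φ w) _).symm
        _ ≤ ∑ j : Fin 3, colSq X (Sum.inl (w, j)) := by
            apply Finset.sum_le_sum
            intro j _
            by_cases hj : j = φ w
            · rw [if_pos hj]; exact colSq_nonneg _ _
            · rw [if_neg hj]; exact bwd_vertex_lb G t φ A hV w j hj
    calc n * (2*(2*t^6 - 2*n*t^12)) = ∑ _w : V, 2*(2*t^6 - 2*n*t^12) := by
          rw [Finset.sum_const, Finset.card_univ, nsmul_eq_mul]
      _ ≤ _ := Finset.sum_le_sum (fun w _ => per w)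
  have hedge : (Fintype.card G.edgeSet : ℝ) * (t^2 + K) + 2*K
      ≤ ∑ e : G.edgeSet, colSq X (Sum.inr e) := by
    set e0 : G.edgeSet := ⟨s(u0,w0), (SimpleGraph.mem_edgeSet G).mpr hadj⟩ with he0
    have per : ∀ e : G.edgeSet,
        (t^2 + K) + (if e = e0 then 2*K else 0) ≤ colSq X (Sum.inr e) := by
      rintro ⟨e, he⟩
      induction e using Sym2.ind with
      | _ u w =>
      have hb := bwd_edge_lb G t φ A hV u w ((SimpleGraph.mem_edgeSet G).mp he) he
      by_cases hee : (⟨s(u,w), he⟩ : G.edgeSet) = e0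
      · have hsym : s(u,w) = s(u0,w0) := congrArg Subtype.val hee
        have hmono' : φ u = φ w := by
          rcases Sym2.eq_iff.mp hsym with ⟨h1, h2⟩ | ⟨h1, h2⟩
          · rw [h1, h2]; exact hmono
          · rw [h1, h2]; exact hmono.symm
        rw [if_pos hee]
        rw [if_pos hmono'] at hb
        rw [hX]
        linarith
      · rw [if_neg hee]
        by_cases hm : φ u = φ w
        · rw [if_pos hm] at hb; rw [hX]; linarith
        · rw [if_neg hm] at hb; rw [hX]; linarith
    calc (Fintype.card G.edgeSet : ℝ) * (t^2 + K) + 2*K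
        = ∑ e : G.edgeSet, ((t^2 + K) + (if e = e0 then 2*K else 0)) := by
          rw [Finset.sum_add_distrib, Finset.sum_const, Finset.card_univ, nsmul_eq_mul,
            Finset.sum_ite_eq' Finset.univ e0 (fun _ => 2*K), if_pos (Finset.mem_univ e0)]
      _ ≤ _ := Finset.sum_le_sum (fun e _ => per e)
  linarith


section BackwardB
variable {V : Type*} [Fintype V] [DecidableEq V]

/-- transfer a sum over the subtype of a finset to a sum over the ambient type -/
lemma sum_U_transfer (U : Finset V) (x : (↥U ⊕ Unit) → ℝ) (k : V → ℝ) :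
    ∑ u : ↥U, k ↑u * x (Sum.inl u)
      = ∑ v, k v * (if h : v ∈ U then x (Sum.inl ⟨v, h⟩) else 0) := by
  calc ∑ u : ↥U, k ↑u * x (Sum.inl u)
      = ∑ u ∈ U.attach, k ↑u * (if h : ↑u ∈ U then x (Sum.inl ⟨↑u, h⟩) else 0) := by
        rw [Finset.univ_eq_attach]
        apply Finset.sum_congr rfl
        intro u _
        rw [dif_pos u.2]
    _ = ∑ v ∈ U, k v * (if h : v ∈ U then x (Sum.inl ⟨v, h⟩) else 0) :=
        Finset.sum_attach U (fun v => k v * (if h : v ∈ U then x (Sum.inl ⟨v, h⟩) else 0))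
    _ = ∑ v, k v * (if h : v ∈ U then x (Sum.inl ⟨v, h⟩) else 0) :=
        Finset.sum_subset (Finset.subset_univ U)
          (fun v _ hv => by rw [dif_neg hv]; ring)

lemma bwd_caseB (G : SimpleGraph V) [DecidableRel G.Adj] (t : ℝ) (ht : 0 < t)
    (𝒱 : Finset ((V × Fin 3) ⊕ G.edgeSet)) (hcard : 𝒱.card = Fintype.card V)
    (A : Matrix ↥𝒱 ((V × Fin 3) ⊕ G.edgeSet) ℝ)
    (v0 : V) (hv0 : ∀ i : Fin 3, Sum.inl (v0, i) ∉ 𝒱) :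
    1 - 2*t^2 ≤ ∑ i, ∑ j,
      ((MG G t - Matrix.of (fun r (c : ↥𝒱) => MG G t r c.val) * A) i j)^2 := by
  classical
  set X := MG G t - Matrix.of (fun r (c : ↥𝒱) => MG G t r c.val) * A with hX
  set U : Finset V := Finset.univ.filter (fun v => ∀ i : Fin 3, Sum.inl (v, i) ∉ 𝒱) with hU
  have hv0U : v0 ∈ U := by
    rw [hU, Finset.mem_filter]
    exact ⟨Finset.mem_univ _, hv0⟩
  set Q : Finset G.edgeSet := Finset.univ.filter (fun e => Sum.inr e ∈ 𝒱) with hQdef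
  -- cardinality: Q.card ≤ U.card
  have hQU : Q.card ≤ U.card := by
    set P : Finset ((V × Fin 3) ⊕ G.edgeSet) := 𝒱.filter (fun c => c.isLeft) with hP
    have hQcard : Q.card = (𝒱.filter (fun c => ¬ c.isLeft)).card := by
      apply Finset.card_bij (fun e _ => Sum.inr e)
      · intro e he
        rw [Finset.mem_filter]
        rw [hQdef, Finset.mem_filter] at he
        exact ⟨he.2, by simp⟩
      · intro e _ e' _ h
        exact Sum.inr.inj h
      · intro c hc
        rw [Finset.mem_filter] at hc
        rcases c with c | e
        · simp at hc
        · exact ⟨e, by rw [hQdef, Finset.mem_filter]; exact ⟨Finset.mem_univ _, hc.1⟩, rfl⟩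
    have hPQ : P.card + Q.card = Fintype.card V := by
      rw [hQcard, hP, Finset.card_filter_add_card_filter_not, hcard]
    have hcov : ∀ v : V, v ∉ U → ∃ i : Fin 3, Sum.inl (v, i) ∈ 𝒱 := by
      intro v hv
      rw [hU, Finset.mem_filter] at hv
      push_neg at hv
      exact hv (Finset.mem_univ v)
    have hUc : (Finset.univ \ U).card ≤ P.card := by
      have hex : ∀ v : V, ∃ c : (V × Fin 3) ⊕ G.edgeSet,
          (v ∉ U → c ∈ P) ∧ ∃ j : Fin 3, c = Sum.inl (v, j) := by
        intro v
        by_cases hv : v ∈ U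
        · exact ⟨Sum.inl (v, 0), fun h => absurd hv h, 0, rfl⟩
        · obtain ⟨i, hi⟩ := hcov v hv
          exact ⟨Sum.inl (v, i), fun _ => by
            rw [hP, Finset.mem_filter]; exact ⟨hi, rfl⟩, i, rfl⟩
      choose f hf1 hf2 using hex
      apply Finset.card_le_card_of_injOn f
      · intro v hv
        have hv' : v ∈ Finset.univ \ U := hv
        rw [Finset.mem_sdiff] at hv'
        exact hf1 v hv'.2
      · intro v _ v' _ h
        obtain ⟨j, hj⟩ := hf2 v
        obtain ⟨j', hj'⟩ := hf2 v'
        rw [hj, hj'] at h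
        exact congrArg Prod.fst (Sum.inl.inj h)
    have hsd : (Finset.univ \ U).card = Fintype.card V - U.card := by
      rw [Finset.card_sdiff_of_subset (Finset.subset_univ U), Finset.card_univ]
    have hUle : U.card ≤ Fintype.card V := by
      rw [← Finset.card_univ]
      exact Finset.card_le_card (Finset.subset_univ U)
    omega
  -- the coefficient matrix
  set W : Matrix ↥Q (↥U ⊕ Unit) ℝ := fun q i =>
    match i with
    | Sum.inl u => if (u : V) ∈ ((q : G.edgeSet) : Sym2 V) then t^2 else 0
    | Sum.inr _ => t
    with hW
  -- a nonzero kernel element, with a zero last coordinate if Q is empty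
  have hex : ∃ x : (↥U ⊕ Unit) → ℝ, x ≠ 0 ∧ W.mulVec x = 0
      ∧ (Q = ∅ → x (Sum.inr ()) = 0) := by
    rcases Finset.eq_empty_or_nonempty Q with hQe | hQne
    · refine ⟨fun i => match i with
        | Sum.inl u => if u = (⟨v0, hv0U⟩ : ↥U) then 1 else 0
        | Sum.inr _ => 0, ?_, ?_, fun _ => rfl⟩
      · intro h
        have := congrFun h (Sum.inl ⟨v0, hv0U⟩)
        simp at this
      · funext q
        exact absurd q.2 (Finset.eq_empty_iff_forall_notMem.mp hQe _)
    · by_contra hno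
      push_neg at hno
      have hker : ∀ x, W.mulVecLin x = 0 → x = 0 := by
        intro x hx
        by_contra hx0
        rw [Matrix.mulVecLin_apply] at hx
        exact hQne.ne_empty (hno x hx0 hx).1
      have hinj : Function.Injective W.mulVecLin := by
        rw [← LinearMap.ker_eq_bot, Submodule.eq_bot_iff]
        intro x hx
        exact hker x hx
      have hle := LinearMap.finrank_le_finrank_of_injective hinj
      rw [Module.finrank_pi, Module.finrank_pi, Fintype.card_sum, Fintype.card_coe,
        Fintype.card_coe, Fintype.card_unique] at hle
      omega
  obtain ⟨x, hx0, hFx, hxQ⟩ := hex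
  set β : ℝ := x (Sum.inr ()) with hβdef
  set z : V → ℝ := fun v => if h : v ∈ U then x (Sum.inl ⟨v, h⟩) else 0 with hz
  set s : ℝ := ∑ i, x i ^ 2 with hs
  have hspos : 0 < s := by
    obtain ⟨i, hi⟩ := Function.ne_iff.mp hx0
    have h2 : 0 < x i ^ 2 := lt_of_le_of_ne (sq_nonneg _) (Ne.symm (pow_ne_zero 2 hi))
    exact lt_of_lt_of_le h2 (Finset.single_le_sum (f := fun i => x i ^2)
      (fun _ _ => sq_nonneg _) (Finset.mem_univ i))
  have hzU : ∀ u : ↥U, z ↑u = x (Sum.inl u) := by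
    intro u
    rw [hz]
    simp [u.2]
  have hzsq : ∑ v, z v ^2 = ∑ u : ↥U, x (Sum.inl u) ^2 := by
    calc ∑ v, z v ^2
        = ∑ v, z v * (if h : v ∈ U then x (Sum.inl ⟨v, h⟩) else 0) :=
          Finset.sum_congr rfl (fun v _ => by rw [sq])
      _ = ∑ u : ↥U, z ↑u * x (Sum.inl u) := (sum_U_transfer U x z).symm
      _ = ∑ u : ↥U, x (Sum.inl u) ^2 :=
          Finset.sum_congr rfl (fun u _ => by rw [hzU u, sq])
  have hssplit : s = ∑ v, z v ^2 + β^2 := by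
    rw [hs, Fintype.sum_sum_type, ← hzsq]
    congr 1
    exact Fintype.sum_unique _
  have hzsum_le : ∑ v, z v ^2 ≤ s := by
    rw [hssplit]
    nlinarith [sq_nonneg β]
  -- the kernel constraints, transferred to sums over V
  have hCon : ∀ e : G.edgeSet, e ∈ Q →
      (∑ v, z v * (if v ∈ (e : Sym2 V) then t^2 else 0)) + β * t = 0 := by
    intro e he
    have h0 := congrFun hFx ⟨e, he⟩
    simp only [Matrix.mulVec, dotProduct, Pi.zero_apply] at h0
    rw [Fintype.sum_sum_type] at h0
    have hWl : ∀ u : ↥U, W ⟨e, he⟩ (Sum.inl u) * x (Sum.inl u)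
        = (if (u:V) ∈ (e : Sym2 V) then t^2 else 0) * x (Sum.inl u) := fun u => rfl
    have hWr : ∑ u : Unit, W ⟨e, he⟩ (Sum.inr u) * x (Sum.inr u) = t * β := by
      rw [Fintype.sum_unique]
    rw [Finset.sum_congr rfl (fun u _ => hWl u), hWr] at h0
    rw [sum_U_transfer U x (fun v => if v ∈ (e : Sym2 V) then t^2 else 0)] at h0
    calc (∑ v, z v * (if v ∈ (e : Sym2 V) then t^2 else 0)) + β * t
        = (∑ v, (if v ∈ (e : Sym2 V) then t^2 else 0) * z v) + t * β := by
          rw [Finset.sum_congr rfl (fun v _ => mul_comm _ _)]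
          ring
      _ = 0 := h0
  -- z vanishes on vertices with a selected vertex column
  have hzsel : ∀ (v' : V) (i : Fin 3), Sum.inl (v', i) ∈ 𝒱 → z v' = 0 := by
    intro v' i hvi
    have hnv : v' ∉ U := by
      rw [hU, Finset.mem_filter]
      push_neg
      intro _
      exact ⟨i, hvi⟩
    simp only [hz]
    rw [dif_neg hnv]
  -- kernel property against every selected column
  have hker : ∀ p : ↥𝒱,
      (∑ v, z v * MG G t (Sum.inl v) p.val)
        + β * MG G t (Sum.inr (Sum.inr ())) p.val = 0 := by
    rintro ⟨pc, hpc⟩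
    rcases pc with ⟨v', i'⟩ | e
    · have h1 : ∑ v, z v * MG G t (Sum.inl v) (Sum.inl (v', i')) = z v' := by
        calc ∑ v, z v * MG G t (Sum.inl v) (Sum.inl (v', i'))
            = ∑ v, (if v = v' then z v else 0) := by
              apply Finset.sum_congr rfl
              intro v _
              show z v * (if v = v' then 1 else 0) = _
              split_ifs <;> ring
          _ = z v' := by rw [Finset.sum_ite_eq']; simp
      show (∑ v, z v * MG G t (Sum.inl v) (Sum.inl (v', i')))
        + β * MG G t (Sum.inr (Sum.inr ())) (Sum.inl (v', i')) = 0
      rw [h1, hzsel v' i' hpc]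
      show 0 + β * 0 = 0
      ring
    · have heQ : e ∈ Q := by rw [hQdef, Finset.mem_filter]; exact ⟨Finset.mem_univ _, hpc⟩
      show (∑ v, z v * MG G t (Sum.inl v) (Sum.inr e))
        + β * MG G t (Sum.inr (Sum.inr ())) (Sum.inr e) = 0
      calc (∑ v, z v * MG G t (Sum.inl v) (Sum.inr e))
          + β * MG G t (Sum.inr (Sum.inr ())) (Sum.inr e)
          = (∑ v, z v * (if v ∈ (e : Sym2 V) then t^2 else 0)) + β * t := rfl
        _ = 0 := hCon e heQ
  -- the weighted inner product with the residual column (u0, 0)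
  have hinner : ∀ u0 : V, u0 ∈ U →
      (∑ v, z v * X (Sum.inl v) (Sum.inl (u0, 0)))
        + β * X (Sum.inr (Sum.inr ())) (Sum.inl (u0, 0)) = z u0 := by
    intro u0 hu0
    set c : (V × Fin 3) ⊕ G.edgeSet := Sum.inl (u0, 0) with hc
    have hXentry : ∀ r, X r c = MG G t r c - ∑ p : ↥𝒱, MG G t r p.val * A p c := by
      intro r
      rw [hX, Matrix.sub_apply, Matrix.mul_apply]
      rfl
    have expand1 : ∑ v, z v * X (Sum.inl v) c
        = (∑ v, z v * MG G t (Sum.inl v) c)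
          - ∑ p : ↥𝒱, (∑ v, z v * MG G t (Sum.inl v) p.val) * A p c := by
      calc ∑ v, z v * X (Sum.inl v) c
          = ∑ v, (z v * MG G t (Sum.inl v) c
              - ∑ p : ↥𝒱, z v * (MG G t (Sum.inl v) p.val * A p c)) := by
            apply Finset.sum_congr rfl
            intro v _
            rw [hXentry (Sum.inl v), mul_sub, Finset.mul_sum]
        _ = (∑ v, z v * MG G t (Sum.inl v) c)
            - ∑ v, ∑ p : ↥𝒱, z v * (MG G t (Sum.inl v) p.val * A p c) := by
            rw [Finset.sum_sub_distrib]
        _ = (∑ v, z v * MG G t (Sum.inl v) c)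
            - ∑ p : ↥𝒱, (∑ v, z v * MG G t (Sum.inl v) p.val) * A p c := by
            rw [Finset.sum_comm]
            congr 1
            apply Finset.sum_congr rfl
            intro p _
            rw [Finset.sum_mul]
            apply Finset.sum_congr rfl
            intro v _
            ring
    have expand2 : β * X (Sum.inr (Sum.inr ())) c
        = β * MG G t (Sum.inr (Sum.inr ())) c
          - ∑ p : ↥𝒱, (β * MG G t (Sum.inr (Sum.inr ())) p.val) * A p c := by
      rw [hXentry (Sum.inr (Sum.inr ())), mul_sub, Finset.mul_sum]
      congr 1
      apply Finset.sum_congr rfl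
      intro p _
      ring
    have hT1 : ∑ v, z v * MG G t (Sum.inl v) c = z u0 := by
      calc ∑ v, z v * MG G t (Sum.inl v) c
          = ∑ v, (if v = u0 then z v else 0) := by
            apply Finset.sum_congr rfl
            intro v _
            show z v * (if v = u0 then 1 else 0) = _
            split_ifs <;> ring
        _ = z u0 := by rw [Finset.sum_ite_eq']; simp
    have hT2 : β * MG G t (Sum.inr (Sum.inr ())) c = 0 := by
      show β * 0 = 0
      ring
    rw [expand1, expand2, hT1, hT2]
    have hzero : ∑ p : ↥𝒱, (∑ v, z v * MG G t (Sum.inl v) p.val) * A p c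
        + ∑ p : ↥𝒱, (β * MG G t (Sum.inr (Sum.inr ())) p.val) * A p c = 0 := by
      rw [← Finset.sum_add_distrib]
      apply Finset.sum_eq_zero
      intro p _
      calc (∑ v, z v * MG G t (Sum.inl v) p.val) * A p c
          + (β * MG G t (Sum.inr (Sum.inr ())) p.val) * A p c
          = ((∑ v, z v * MG G t (Sum.inl v) p.val)
            + β * MG G t (Sum.inr (Sum.inr ())) p.val) * A p c := by ring
        _ = 0 := by rw [hker p]; ring
    linarith [hzero]
  -- Cauchy–Schwarz per uncovered vertex
  have hCS : ∀ u0 : V, u0 ∈ U → z u0 ^2 / s ≤ colSq X (Sum.inl (u0, 0)) := by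
    intro u0 hu0
    set w : (V ⊕ Fin 3 ⊕ Unit) → ℝ :=
      Sum.elim z (Sum.elim (fun _ => 0) (fun _ => β)) with hw
    have hw2 : ∑ r, w r ^2 = s := by
      rw [Fintype.sum_sum_type, Fintype.sum_sum_type, hssplit]
      have h1 : ∑ v, w (Sum.inl v) ^2 = ∑ v, z v ^2 := rfl
      have h2 : ∑ i : Fin 3, w (Sum.inr (Sum.inl i)) ^2 = 0 := by
        apply Finset.sum_eq_zero
        intro i _
        show (0:ℝ)^2 = 0
        ring
      have h3 : ∑ u : Unit, w (Sum.inr (Sum.inr u)) ^2 = β^2 := by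
        rw [Fintype.sum_unique]
        rfl
      rw [h1, h2, h3]
      ring
    have hwip : ∑ r, w r * X r (Sum.inl (u0, 0)) = z u0 := by
      rw [Fintype.sum_sum_type, Fintype.sum_sum_type]
      have h2 : ∑ i : Fin 3, w (Sum.inr (Sum.inl i)) * X (Sum.inr (Sum.inl i)) (Sum.inl (u0,0)) = 0 := by
        apply Finset.sum_eq_zero
        intro i _
        show (0:ℝ) * _ = 0
        ring
      have h3 : ∑ u : Unit, w (Sum.inr (Sum.inr u)) * X (Sum.inr (Sum.inr u)) (Sum.inl (u0,0))
          = β * X (Sum.inr (Sum.inr ())) (Sum.inl (u0,0)) := by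
        rw [Fintype.sum_unique]
        rfl
      rw [h2, h3]
      calc (∑ v, w (Sum.inl v) * X (Sum.inl v) (Sum.inl (u0,0)))
            + (0 + β * X (Sum.inr (Sum.inr ())) (Sum.inl (u0,0)))
          = (∑ v, z v * X (Sum.inl v) (Sum.inl (u0,0)))
            + β * X (Sum.inr (Sum.inr ())) (Sum.inl (u0,0)) := by
            rw [zero_add]
            rfl
        _ = z u0 := hinner u0 hu0
    have hcs := Finset.sum_mul_sq_le_sq_mul_sq Finset.univ w
      (fun r => X r (Sum.inl (u0, 0)))
    rw [hwip, hw2] at hcs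
    rw [div_le_iff₀ hspos]
    calc z u0 ^2 ≤ s * ∑ r, X r (Sum.inl (u0,0)) ^2 := hcs
      _ = colSq X (Sum.inl (u0,0)) * s := by rw [mul_comm]; rfl
  -- bound on β
  have hβb : β^2 ≤ 2*t^2*s := by
    rcases Finset.eq_empty_or_nonempty Q with hQe | ⟨q0, hq0⟩
    · rw [hxQ hQe]
      have hpos : 0 < t^2*s := mul_pos (pow_pos ht 2) hspos
      nlinarith [hpos]
    · have hcon := hCon q0 hq0
      obtain ⟨a, b, hab, hne⟩ : ∃ a b : V, (q0 : Sym2 V) = s(a, b) ∧ a ≠ b := by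
        rcases q0 with ⟨e0s, he0s⟩
        induction e0s using Sym2.ind with
        | _ a b =>
          exact ⟨a, b, rfl, ((SimpleGraph.mem_edgeSet G).mp he0s).ne⟩
      rw [hab] at hcon
      have hsum : ∑ v, z v * (if v ∈ (s(a,b) : Sym2 V) then t^2 else 0)
          = t^2 * z a + t^2 * z b := by
        calc ∑ v, z v * (if v ∈ (s(a,b) : Sym2 V) then t^2 else 0)
            = ∑ v, (if v ∈ (s(a,b) : Sym2 V) then t^2 * z v else 0) := by
              apply Finset.sum_congr rfl
              intro v _
              split_ifs <;> ring
          _ = t^2 * z a + t^2 * z b := sym2_sum a b hne _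
      rw [hsum] at hcon
      -- β * t = -(t^2 (z a + z b)), so β = -t (z a + z b)
      have hβval : β = -(t * (z a + z b)) := by
        have h1 : β * t = (-(t * (z a + z b))) * t := by ring_nf; linarith [hcon]
        exact mul_right_cancel₀ (ne_of_gt ht) h1
      have hzz : (z a + z b)^2 ≤ 2 * (z a ^2 + z b ^2) := by nlinarith [sq_nonneg (z a - z b)]
      have hpair : z a ^2 + z b ^2 ≤ ∑ v, z v ^2 :=
        pair_le_sum (fun v => z v ^2) (fun v => sq_nonneg _) hne
      have h2 : 2*t^2*(z a ^2 + z b ^2) ≤ 2*t^2*s := by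
        apply mul_le_mul_of_nonneg_left (le_trans hpair hzsum_le)
        positivity
      calc β^2 = t^2 * (z a + z b)^2 := by rw [hβval]; ring
        _ ≤ t^2 * (2 * (z a ^2 + z b ^2)) := mul_le_mul_of_nonneg_left hzz (sq_nonneg t)
        _ ≤ 2*t^2*s := by linarith [h2]
  -- final assembly
  have himg : ∑ c ∈ U.image (fun v => (Sum.inl (v, (0:Fin 3)) : (V × Fin 3) ⊕ G.edgeSet)),
      colSq X c = ∑ v ∈ U, colSq X (Sum.inl (v, 0)) := by
    apply Finset.sum_image
    intro v _ v' _ h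
    exact congrArg Prod.fst (Sum.inl.inj h)
  have hzUsq : ∑ v ∈ U, z v ^2 = ∑ v, z v ^2 :=
    Finset.sum_subset (Finset.subset_univ U)
      (fun v _ hv => by simp only [hz]; rw [dif_neg hv]; norm_num)
  calc 1 - 2*t^2 ≤ (s - β^2)/s := by
        rw [le_div_iff₀ hspos]
        nlinarith [hβb]
    _ = (∑ v ∈ U, z v ^2)/s := by rw [hzUsq, hssplit]; ring_nf
    _ = ∑ v ∈ U, z v ^2/s := Finset.sum_div _ _ _
    _ ≤ ∑ v ∈ U, colSq X (Sum.inl (v, 0)) :=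
        Finset.sum_le_sum (fun v hv => hCS v hv)
    _ = ∑ c ∈ U.image (fun v => (Sum.inl (v, (0:Fin 3)) : (V × Fin 3) ⊕ G.edgeSet)),
        colSq X c := himg.symm
    _ ≤ ∑ c, colSq X c :=
        Finset.sum_le_sum_of_subset_of_nonneg (Finset.subset_univ _)
          (fun c _ _ => colSq_nonneg X c)
    _ = ∑ i, ∑ j, X i j ^2 := (frobSq_eq X).symm

end BackwardB


section Final
variable {V : Type*} [Fintype V] [DecidableEq V]

lemma cases_lemma (G : SimpleGraph V) [DecidableRel G.Adj]
    (𝒱 : Finset ((V × Fin 3) ⊕ G.edgeSet)) (hcard : 𝒱.card = Fintype.card V) :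
    (∃ φ : V → Fin 3, 𝒱 = VSet G φ) ∨ (∃ v0 : V, ∀ i : Fin 3, Sum.inl (v0, i) ∉ 𝒱) := by
  by_cases h : ∀ v : V, ∃ i : Fin 3, Sum.inl (v, i) ∈ 𝒱
  · left
    choose φ hφ using h
    refine ⟨φ, ?_⟩
    have hsub : VSet G φ ⊆ 𝒱 := by
      intro c hc
      obtain ⟨v, rfl⟩ := (mem_VSet_iff G φ c).mp hc
      exact hφ v
    exact (Finset.eq_of_subset_of_card_le hsub (by rw [hcard, card_VSet])).symm
  · right
    push_neg at h
    exact h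

set_option maxHeartbeats 1000000 in
lemma arith_facts (n m : ℕ) (hn1 : 1 ≤ n) (hm1 : 1 ≤ m) (t : ℝ)
    (ht : t = 1/(4*((m:ℝ)+(n:ℝ))^3)) :
    0 < t ∧ (n:ℝ)*t^6 ≤ 1 ∧
      4*(n:ℝ)^2*t^2 + ((m:ℝ)*(n:ℝ)+2*(n:ℝ))*t^6 ≤ 1 ∧
      (m:ℝ)*t^2 + 4*(n:ℝ)*t^6 + (m:ℝ)*t^10 + t^10 ≤ 1 - 2*t^2 := by
  set N : ℝ := (m:ℝ)+(n:ℝ) with hN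
  have hn' : (1:ℝ) ≤ (n:ℝ) := by exact_mod_cast hn1
  have hm' : (1:ℝ) ≤ (m:ℝ) := by exact_mod_cast hm1
  have hN2 : 2 ≤ N := by rw [hN]; linarith
  have hNpos : 0 < N := by linarith
  have ht0 : 0 < t := by rw [ht]; positivity
  have htN : t * (4*N^3) = 1 := by
    rw [ht]
    field_simp
  have hcube : 0 ≤ N^3 - 8 := by
    have hp := mul_nonneg (sub_nonneg.mpr hN2) (by positivity : (0:ℝ) ≤ N^2+2*N+4)
    nlinarith [hp]
  have hNt : N * t ≤ 1/16 := by
    have h216 : (0:ℝ) ≤ 4*N^2 - 16 := by nlinarith [hN2]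
    have hNtpos : 0 < N*t := mul_pos hNpos ht0
    have hp := mul_nonneg h216 hNtpos.le
    nlinarith [hp, htN]
  have ht32 : t ≤ 1/32 := by
    have h232 : (0:ℝ) ≤ 4*N^3 - 32 := by nlinarith [hcube]
    have hp := mul_nonneg h232 ht0.le
    nlinarith [hp, htN]
  have ht1 : t ≤ 1 := by linarith
  have ht2 : t^2 ≤ 1/1024 := by nlinarith [ht32, ht0]
  have ht4 : t^4 ≤ 1 := by nlinarith [ht2, ht0, sq_nonneg (t^2)]
  have ht8 : t^8 ≤ 1 := by nlinarith [ht4, pow_nonneg ht0.le 4]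
  have hnN : (n:ℝ) ≤ N := by rw [hN]; linarith
  have hmN : (m:ℝ) ≤ N := by rw [hN]; linarith
  have hNt2 : N*t^2 ≤ 1/512 := by
    have h1 : N*t^2 = (N*t)*t := by ring
    rw [h1]
    calc (N*t)*t ≤ (1/16)*(1/32) := by
          apply mul_le_mul hNt ht32 ht0.le (by norm_num)
      _ ≤ 1/512 := by norm_num
  have hN2t2 : N^2*t^2 ≤ 1/256 := by
    have h1 : N^2*t^2 = (N*t)^2 := by ring
    rw [h1]
    calc (N*t)^2 ≤ (1/16)^2 := by
          apply pow_le_pow_left₀ (by positivity) hNt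
      _ ≤ 1/256 := by norm_num
  have hnt2 : (n:ℝ)*t^2 ≤ 1/512 :=
    le_trans (by nlinarith [sq_nonneg t, hnN]) hNt2
  have hmt2 : (m:ℝ)*t^2 ≤ 1/512 :=
    le_trans (by nlinarith [sq_nonneg t, hmN]) hNt2
  have hn2t2 : (n:ℝ)^2*t^2 ≤ 1/256 := by
    have h : (n:ℝ)^2 ≤ N^2 := by nlinarith [hnN, hn']
    have hp := mul_le_mul_of_nonneg_right h (sq_nonneg t)
    exact le_trans hp hN2t2
  have hmnt2 : (m:ℝ)*(n:ℝ)*t^2 ≤ 1/256 := by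
    have h : (m:ℝ)*(n:ℝ) ≤ N^2 := by nlinarith [hnN, hmN, hn', hm']
    have hp := mul_le_mul_of_nonneg_right h (sq_nonneg t)
    exact le_trans hp hN2t2
  refine ⟨ht0, ?_, ?_, ?_⟩
  · -- n t^6 ≤ 1
    have : (n:ℝ)*t^6 = ((n:ℝ)*t^2)*t^4 := by ring
    rw [this]
    calc ((n:ℝ)*t^2)*t^4 ≤ (1/512)*1 := by
          apply mul_le_mul hnt2 ht4 (by positivity) (by norm_num)
      _ ≤ 1 := by norm_num
  · -- 4n²t² + (mn+2n)t⁶ ≤ 1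
    have h1 : 4*(n:ℝ)^2*t^2 ≤ 4*(1/256) := by linarith [hn2t2]
    have h2 : (m:ℝ)*(n:ℝ)*t^6 = ((m:ℝ)*(n:ℝ)*t^2)*t^4 := by ring
    have h3 : (m:ℝ)*(n:ℝ)*t^6 ≤ (1/256)*1 := by
      rw [h2]
      apply mul_le_mul hmnt2 ht4 (by positivity) (by norm_num)
    have h4 : 2*(n:ℝ)*t^6 = 2*(((n:ℝ)*t^2)*t^4) := by ring
    have h5 : 2*(n:ℝ)*t^6 ≤ 2*((1/512)*1) := by
      rw [h4]
      have := mul_le_mul hnt2 ht4 (by positivity) (by norm_num : (0:ℝ) ≤ 1/512)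
      linarith
    linarith [h1, h3, h5]
  · -- m t² + 4n t⁶ + m t¹⁰ + t¹⁰ + 2t² ≤ 1
    have h1 : 4*(n:ℝ)*t^6 ≤ 4*((1/512)*1) := by
      have e : (n:ℝ)*t^6 = ((n:ℝ)*t^2)*t^4 := by ring
      have := mul_le_mul hnt2 ht4 (by positivity) (by norm_num : (0:ℝ) ≤ 1/512)
      nlinarith [this]
    have h2 : (m:ℝ)*t^10 ≤ (1/512)*1 := by
      have e : (m:ℝ)*t^10 = ((m:ℝ)*t^2)*t^8 := by ring
      rw [e]
      apply mul_le_mul hmt2 ht8 (by positivity) (by norm_num)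
    have h3 : t^10 ≤ 1/1024 := by
      have e : t^10 = t^2*t^8 := by ring
      rw [e]
      calc t^2*t^8 ≤ (1/1024)*1 := by
            apply mul_le_mul ht2 ht8 (by positivity) (by norm_num)
        _ = 1/1024 := by norm_num
    linarith [hmt2, h1, h2, h3, ht2]

end Final

/-- A graph `G` with `n ≥ 1` vertices and `m ≥ 1` edges has a three-coloring if and only if
`δ_n(M(G)) ≤ √(m t² + 4 n t⁶ + m t¹⁰)`, where `t = 1/(4(m+n)³)`. -/
theorem column_subset_selection_three_coloring
    {V : Type*} [Fintype V] [DecidableEq V] (G : SimpleGraph V) [DecidableRel G.Adj]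
    (n m : ℕ) (hn : n = Fintype.card V) (hm : m = G.edgeFinset.card)
    (hn1 : 1 ≤ n) (hm1 : 1 ≤ m)
    (t : ℝ) (ht : t = 1 / (4 * (m + n) ^ 3)) :
    (∃ φ : V → Fin 3, ∀ u v : V, G.Adj u v → φ u ≠ φ v) ↔
      delta (MG G t) n ≤
        Real.sqrt (m * t ^ 2 + 4 * n * t ^ 6 + m * t ^ 10) := by
  obtain ⟨ht0, hfc, hfb, hfd⟩ := arith_facts n m hn1 hm1 t ht
  have hcV : (Fintype.card V : ℝ) = (n:ℝ) := by exact_mod_cast congrArg Nat.cast hn.symm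
  have hmE : Fintype.card ↥G.edgeSet = m := by
    rw [hm, SimpleGraph.edgeFinset, Set.toFinset_card]
  have hcE : (Fintype.card ↥G.edgeSet : ℝ) = (m:ℝ) := by exact_mod_cast congrArg Nat.cast hmE
  constructor
  · rintro ⟨φ, hφ⟩
    unfold delta
    apply csInf_le
    · refine ⟨0, ?_⟩
      rintro x ⟨𝒱, hc, A, rfl⟩
      exact Real.sqrt_nonneg _
    · refine ⟨VSet G φ, by rw [card_VSet, hn], Afwd G t φ, ?_⟩
      unfold frob
      congr 1
      rw [fwd_total G t φ hφ, hcV, hcE]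
  · intro hle
    by_contra hcol
    push_neg at hcol
    set B2 : ℝ := ↑m * t ^ 2 + 4 * ↑n * t ^ 6 + ↑m * t ^ 10 with hB2
    have hlb : ∀ x ∈ { x : ℝ | ∃ 𝒱 : Finset ((V × Fin 3) ⊕ G.edgeSet),
        𝒱.card = n ∧ ∃ A : Matrix 𝒱 ((V × Fin 3) ⊕ G.edgeSet) ℝ,
        x = frob (MG G t - Matrix.of (fun r (c : 𝒱) => MG G t r c.val) * A) },
        Real.sqrt (B2 + t^10) ≤ x := by
      rintro x ⟨𝒱, hc, A, rfl⟩
      have hmain : B2 + t^10 ≤ ∑ i, ∑ j,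
          ((MG G t - Matrix.of (fun r (c : ↥𝒱) => MG G t r c.val) * A) i j)^2 := by
        rcases cases_lemma G 𝒱 (by rw [hc, hn]) with ⟨φ, rfl⟩ | ⟨v0, hv0⟩
        · obtain ⟨u0, w0, hadj, hmono⟩ := hcol φ
          have hVpos : 0 < (Fintype.card V : ℝ) := by
            rw [hcV]
            have : (1:ℝ) ≤ (n:ℝ) := by exact_mod_cast hn1
            linarith
          have hK : 0 ≤ t^10 - (Fintype.card V : ℝ)*t^16 := by
            rw [hcV]
            have he : t^10 - (n:ℝ)*t^16 = t^10*(1 - (n:ℝ)*t^6) := by ring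
            rw [he]
            exact mul_nonneg (pow_nonneg ht0.le 10) (by linarith [hfc])
          have htot := bwd_caseA_total G t φ A hVpos hK u0 w0 hadj hmono
          rw [hcV, hcE] at htot
          have hnum : B2 + t^10 ≤ (n:ℝ)*(2*(2*t^6 - 2*(n:ℝ)*t^12))
              + ((m:ℝ)*(t^2+(t^10-(n:ℝ)*t^16)) + 2*(t^10-(n:ℝ)*t^16)) := by
            rw [hB2]
            have hp := mul_nonneg (pow_nonneg ht0.le 10) (sub_nonneg.mpr hfb)
            nlinarith [hp]
          linarith [htot, hnum]
        · have htot := bwd_caseB G t ht0 𝒱 (by rw [hc, hn]) A v0 hv0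
          have hnum : B2 + t^10 ≤ 1 - 2*t^2 := by rw [hB2]; linarith [hfd]
          linarith [htot, hnum]
      calc Real.sqrt (B2 + t^10)
          ≤ Real.sqrt (∑ i, ∑ j,
            ((MG G t - Matrix.of (fun r (c : ↥𝒱) => MG G t r c.val) * A) i j)^2) :=
            Real.sqrt_le_sqrt hmain
        _ = frob (MG G t - Matrix.of (fun r (c : ↥𝒱) => MG G t r c.val) * A) := rfl
    have hne : { x : ℝ | ∃ 𝒱 : Finset ((V × Fin 3) ⊕ G.edgeSet),
        𝒱.card = n ∧ ∃ A : Matrix 𝒱 ((V × Fin 3) ⊕ G.edgeSet) ℝ,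
        x = frob (MG G t - Matrix.of (fun r (c : 𝒱) => MG G t r c.val) * A) }.Nonempty := by
      have hcount : n ≤ (Finset.univ : Finset ((V × Fin 3) ⊕ G.edgeSet)).card := by
        rw [Finset.card_univ, Fintype.card_sum, Fintype.card_prod, Fintype.card_fin, hmE, ← hn]
        nlinarith [hn1, hm1]
      obtain ⟨T, _, hTcard⟩ := Finset.exists_subset_card_eq hcount
      exact ⟨_, T, hTcard, 0, rfl⟩
    have hge : Real.sqrt (B2 + t^10) ≤ delta (MG G t) n := le_csInf hne hlb
    have hB2n : 0 ≤ B2 := by rw [hB2]; positivity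
    have hlt : Real.sqrt B2 < Real.sqrt (B2 + t^10) :=
      Real.sqrt_lt_sqrt hB2n (by nlinarith [pow_pos ht0 10])
    linarith [hle, hge, hlt]
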